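/- For any reals a₁ < a₂ < ⋯ < aₙ and b₁ < b₂ < ⋯ < bₙ, the matrix with entries exp(aᵢbⱼ) has positive determinant. -/

import Mathlib

open Real Finset

/-- A nontrivial linear combination of exponentials with strictly increasing rates
cannot vanish at `n` strictly increasing points. -/
lemma expPoly_eq_zero : ∀ (n : ℕ) (a c : Fin n → ℝ), StrictMono a →
    ∀ x : Fin n → ℝ, StrictMono x →
    (∀ j, ∑ i, c i * Real.exp (a i * x j) = 0) → ∀ i, c i = 0 := by
  intro n
  induction n with
  | zero => intro a c _ x _ _ i; exact i.elim0
  | succ n ih =>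
    intro a c ha x hx hzero
    set g : ℝ → ℝ := fun t => ∑ i, c i * Real.exp ((a i - a 0) * t) with hg
    have hg' : ∀ t : ℝ, HasDerivAt g
        (∑ i, c i * ((a i - a 0) * Real.exp ((a i - a 0) * t))) t := by
      intro t
      apply HasDerivAt.fun_sum
      intro i _
      have h1 : HasDerivAt (fun t : ℝ => (a i - a 0) * t) (a i - a 0) t := by
        simpa using (hasDerivAt_id t).const_mul (a i - a 0)
      have h2 := ((Real.hasDerivAt_exp _).comp t h1).const_mul (c i)
      simpa [Function.comp, mul_comm] using h2
    have hgzero : ∀ j, g (x j) = 0 := by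
      intro j
      have : g (x j) = Real.exp (-(a 0 * x j)) * ∑ i, c i * Real.exp (a i * x j) := by
        rw [Finset.mul_sum]
        refine Finset.sum_congr rfl fun i _ => ?_
        rw [show (a i - a 0) * x j = -(a 0 * x j) + a i * x j by ring, Real.exp_add]
        ring
      rw [this, hzero j, mul_zero]
    -- Rolle between consecutive zeros
    have key : ∀ j : Fin n, ∃ y ∈ Set.Ioo (x j.castSucc) (x j.succ),
        (∑ i, c i * ((a i - a 0) * Real.exp ((a i - a 0) * y))) = 0 := by
      intro j
      have hlt : x j.castSucc < x j.succ := hx Fin.castSucc_lt_succ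
      have hcont : ContinuousOn g (Set.Icc (x j.castSucc) (x j.succ)) :=
        (continuous_iff_continuousAt.mpr fun t => (hg' t).continuousAt).continuousOn
      have heq : g (x j.castSucc) = g (x j.succ) := by
        rw [hgzero, hgzero]
      exact exists_hasDerivAt_eq_zero hlt hcont heq (fun t _ => hg' t)
    choose y hy hyz using key
    have hymono : StrictMono y := by
      intro j j' hjj'
      have h1 : (y j) < x j.succ := (hy j).2
      have h2 : x j'.castSucc < y j' := (hy j').1
      have h3 : x j.succ ≤ x j'.castSucc := by
        apply hx.monotone
        have hvv : (j : ℕ) < (j' : ℕ) := hjj'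
        rw [Fin.le_def]
        simp only [Fin.val_succ, Fin.coe_castSucc]
        omega
      linarith
    have hsucc : ∀ i : Fin n, c i.succ = 0 := by
      intro i
      have := ih (fun i => a i.succ - a 0) (fun i => c i.succ * (a i.succ - a 0))
        (fun i i' h => by
          have := ha (Fin.succ_lt_succ_iff.mpr h); simpa using sub_lt_sub_right this (a 0))
        y hymono
        (fun j => by
          have h0 := hyz j
          rw [Fin.sum_univ_succ] at h0
          simp only [sub_self, zero_mul, mul_zero, zero_add] at h0
          rw [← h0]
          refine Finset.sum_congr rfl fun i _ => ?_
          ring) i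
      have hpos : 0 < a i.succ - a 0 := by
        have := ha (Fin.succ_pos i)
        linarith
      rcases mul_eq_zero.mp this with h | h
      · exact h
      · exact absurd h (ne_of_gt hpos)
    have hc0 : c 0 = 0 := by
      have h0 := hzero 0
      rw [Fin.sum_univ_succ] at h0
      have : ∑ i : Fin n, c i.succ * Real.exp (a i.succ * x 0) = 0 := by
        refine Finset.sum_eq_zero fun i _ => by rw [hsucc i, zero_mul]
      rw [this, add_zero] at h0
      exact (mul_eq_zero.mp h0).resolve_right (Real.exp_ne_zero _)
    intro i
    rcases Fin.eq_zero_or_eq_succ i with h | ⟨i', rfl⟩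
    · rw [h]; exact hc0
    · exact hsucc i'

/-- The exponential kernel matrix has nonzero determinant at injective nodes. -/
lemma expMatrix_det_ne_zero {n : ℕ} (a b : Fin n → ℝ) (ha : StrictMono a)
    (hb : StrictMono b) :
    Matrix.det (Matrix.of fun i j => Real.exp (a i * b j)) ≠ 0 := by
  intro hdet
  obtain ⟨v, hv, hmv⟩ := (Matrix.exists_mulVec_eq_zero_iff).mpr hdet
  apply hv
  funext j
  have hz : ∀ i, ∑ k, v k * Real.exp (b k * a i) = 0 := by
    intro i
    have := congrFun hmv i
    simp only [Matrix.mulVec, dotProduct, Matrix.of_apply, Pi.zero_apply] at this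
    rw [← this]
    refine Finset.sum_congr rfl fun k _ => ?_
    ring_nf
  exact expPoly_eq_zero n b v hb a ha hz j

lemma strictMono_combo {n : ℕ} {a b : Fin n → ℝ} (ha : StrictMono a) (hb : StrictMono b)
    {t : ℝ} (ht0 : 0 ≤ t) (ht1 : t ≤ 1) :
    StrictMono (fun i => (1 - t) * a i + t * b i) := by
  intro i j hij
  have h2 : a i < a j := ha hij
  have h3 : b i < b j := hb hij
  simp only []
  rcases eq_or_lt_of_le ht0 with h0 | h0
  · rw [← h0]; simpa using h2
  rcases eq_or_lt_of_le ht1 with h1 | h1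
  · rw [h1]; simpa using h3
  nlinarith

theorem stmt_16 (n : ℕ) (a b : Fin n → ℝ) (ha : StrictMono a) (hb : StrictMono b) :
    0 < Matrix.det (Matrix.of fun i j => Real.exp (a i * b j)) := by
  -- base point: a₀ = b₀ = fun i => i, where the matrix is Vandermonde with nodes exp i
  set a₀ : Fin n → ℝ := fun i => (i : ℝ) with ha₀def
  have ha₀ : StrictMono a₀ := fun i j hij => by
    exact_mod_cast Nat.cast_lt.mpr hij
  have hbase : 0 < Matrix.det (Matrix.of fun i j => Real.exp (a₀ i * a₀ j)) := by
    have hvdm : (Matrix.of fun i j : Fin n => Real.exp (a₀ i * a₀ j)) =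
        Matrix.vandermonde (fun i => Real.exp (a₀ i)) := by
      ext i j
      simp only [Matrix.of_apply, Matrix.vandermonde_apply, ha₀def]
      rw [← Real.exp_nat_mul]
      ring_nf
    rw [hvdm, Matrix.det_vandermonde]
    apply Finset.prod_pos
    intro i _
    apply Finset.prod_pos
    intro j hj
    have hij : i < j := Finset.mem_Ioi.mp hj
    have : a₀ i < a₀ j := ha₀ hij
    have := Real.exp_lt_exp.mpr this
    linarith
  -- the path
  set F : ℝ → ℝ := fun t => Matrix.det (Matrix.of fun i j =>
    Real.exp (((1 - t) * a₀ i + t * a i) * ((1 - t) * a₀ j + t * b j))) with hF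
  have hF0 : F 0 = Matrix.det (Matrix.of fun i j => Real.exp (a₀ i * a₀ j)) := by
    simp [hF]
  have hF1 : F 1 = Matrix.det (Matrix.of fun i j => Real.exp (a i * b j)) := by
    simp [hF]
  have hFne : ∀ t ∈ Set.Icc (0:ℝ) 1, F t ≠ 0 := by
    intro t ht
    exact expMatrix_det_ne_zero _ _ (strictMono_combo ha₀ ha ht.1 ht.2)
      (strictMono_combo ha₀ hb ht.1 ht.2)
  have hFcont : ContinuousOn F (Set.Icc 0 1) := by
    apply Continuous.continuousOn
    apply Continuous.matrix_det
    apply continuous_matrix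
    intro i j
    apply Real.continuous_exp.comp
    continuity
  by_contra hle
  push_neg at hle
  have h1lt : F 1 < 0 := by
    rcases lt_or_eq_of_le hle with h | h
    · rw [hF1]; exact h
    · exact absurd (hF1.trans h) (hFne 1 (by norm_num))
  have h0 : 0 < F 0 := hF0 ▸ hbase
  obtain ⟨t, ht, hFt⟩ : ∃ t ∈ Set.Icc (0:ℝ) 1, F t = 0 := by
    have : (0:ℝ) ∈ Set.Icc (F 1) (F 0) := ⟨le_of_lt h1lt, le_of_lt h0⟩
    have := intermediate_value_Icc' (by norm_num : (0:ℝ) ≤ 1) hFcont this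
    obtain ⟨t, htmem, htval⟩ := this
    exact ⟨t, htmem, htval⟩
  exact hFne t ht hFt
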